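/- arXiv:2504.11407 — 2 statements merged into one kernel-verified Lean document; each statement's English description precedes it below -/
import Mathlib

section
/- Assume Hypothesis 1 and that the quotient structure D₁ is a symmetric 1-design with k₁ = v₁ − 1. Then v₀ = k₀², v₁ = k₀ + 2, v = k₀²(k₀+2), k = k₀(k₀+1), r = (k₀+1)λ, b = k₀(k₀+2)λ, and for D₀ one has λ₀ = λ/μ, r₀ = (k₀+1)λ/μ, b₀ = k₀(k₀+1)λ/μ. In particular λ ≥ k₀, and λ = k₀ if and only if D is a symmetric 2-design (v = b, equivalently r = k). -/
open Finset

namespace FlagTransitivePaper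

/-- A nontrivial 2-design `D` (point set `P`, blocks indexed by `ι`, the block `i`
having point set `blk i`) with parameters `(v, k, λ)`, replication number `r` and `b`
blocks, together with a group `G` acting on points and blocks as a flag-transitive
automorphism group of `D`, preserving a nontrivial partition `Σ` of `P` into `v₁`
classes of size `v₀`; the partition is encoded by the class map `proj : P → Q`, where
`Q` is the set of classes.  The structure also records the Camina–Zieschang data:
the constant `k₀` (every block meets every class in `0` or `k₀` points), `k₁ = k/k₀`
(the constant number of classes met by a block, i.e. the size of the trace of a
block on `Σ`), the constant `μ` (the number of blocks inducing a given nonempty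
trace on a given class) and the constant `η` (the number of blocks having a given
trace on `Σ`), as well as the parameters `λ₁` and `r₁` of the quotient structure
`D₁` (these are constrained only via `Hyp32`, i.e. when `D₁` is a 2-design). -/
structure Setting (P ι Q G : Type*) [Fintype P] [DecidableEq P] [Fintype ι]
    [Fintype Q] [DecidableEq Q] [Group G] [MulAction G P] [MulAction G ι]
    [MulAction G Q] where
  /-- the set of points of a block -/
  blk : ι → Finset P
  /-- the map sending a point to its class in the partition `Σ` -/
  proj : P → Q
  v : ℕ
  k : ℕ
  lam : ℕ
  r : ℕ
  b : ℕ
  v₀ : ℕ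
  v₁ : ℕ
  k₀ : ℕ
  k₁ : ℕ
  μ : ℕ
  η : ℕ
  lam₁ : ℕ
  r₁ : ℕ
  card_points : Fintype.card P = v
  card_blocks : Fintype.card ι = b
  two_lt_k : 2 < k
  k_lt_v : k < v
  blk_card : ∀ i : ι, (blk i).card = k
  pair_count : ∀ x y : P, x ≠ y →
    (univ.filter fun i : ι => x ∈ blk i ∧ y ∈ blk i).card = lam
  rep_count : ∀ x : P, (univ.filter fun i : ι => x ∈ blk i).card = r
  smul_blk : ∀ (g : G) (i : ι), blk (g • i) = (blk i).image fun x => g • x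
  flag_trans : ∀ (x : P) (i : ι), x ∈ blk i → ∀ (y : P) (j : ι), y ∈ blk j →
    ∃ g : G, g • x = y ∧ g • i = j
  proj_equivariant : ∀ (g : G) (x : P), proj (g • x) = g • proj x
  fiber_card : ∀ q : Q, (univ.filter fun x : P => proj x = q).card = v₀
  card_classes : Fintype.card Q = v₁
  one_lt_v₀ : 1 < v₀
  one_lt_v₁ : 1 < v₁
  two_le_k₀ : 2 ≤ k₀
  k₀_mul_k₁ : k₀ * k₁ = k
  blk_fiber_card : ∀ (i : ι) (q : Q),
    ((blk i).filter fun x => proj x = q).card = 0 ∨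
      ((blk i).filter fun x => proj x = q).card = k₀
  trace_card : ∀ i : ι,
    (univ.filter fun q : Q => ((blk i).filter fun x => proj x = q).Nonempty).card = k₁
  mu_count : ∀ (i : ι) (q : Q), ((blk i).filter fun x => proj x = q).Nonempty →
    (univ.filter fun j : ι =>
      (blk j).filter (fun x => proj x = q) = (blk i).filter fun x => proj x = q).card = μ
  eta_count : ∀ i : ι,
    (univ.filter fun j : ι =>
      (univ.filter fun q : Q => ((blk j).filter fun x => proj x = q).Nonempty) =
        univ.filter fun q : Q => ((blk i).filter fun x => proj x = q).Nonempty).card = η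

variable {P ι Q G : Type*} [Fintype P] [DecidableEq P] [Fintype ι] [Fintype Q]
  [DecidableEq Q] [Group G] [MulAction G P] [MulAction G ι] [MulAction G Q]

namespace Setting

variable (S : Setting P ι Q G)

/-- The trace of the block `i` on the class `q`, i.e. `B ∩ Δ`. -/
def fiberTrace (i : ι) (q : Q) : Finset P := (S.blk i).filter fun x => S.proj x = q

/-- The trace of the block `i` on `Σ`: the set of classes met by the block. -/
def trace (i : ι) : Finset Q := univ.filter fun q : Q => (S.fiberTrace i q).Nonempty

/-- `A = gcd (k₁ − 1, v₁ − 1)`. -/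
def A : ℕ := Nat.gcd (S.k₁ - 1) (S.v₁ - 1)

/-- `η₀ = gcd (η, v₀ / k₀)`. -/
def η₀ : ℕ := Nat.gcd S.η (S.v₀ / S.k₀)

/-- `η₁ = η / η₀`. -/
def η₁ : ℕ := S.η / S.η₀

/-- `r₁' = (v₀ / (k₀ η₀)) · ((v₀ − 1)/(k₀ − 1))`. -/
def r₁' : ℕ := S.v₀ / (S.k₀ * S.η₀) * ((S.v₀ - 1) / (S.k₀ - 1))

/-- **Hypothesis 1**: `λ` is a prime dividing `r`, `v ≤ 2λ²(λ−1)`, and the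
partition `Σ` is minimal (w.r.t. refinement) among the nontrivial `G`-invariant
partitions of the point set. -/
def Hyp1 : Prop :=
  S.lam.Prime ∧ S.lam ∣ S.r ∧ S.v ≤ 2 * S.lam ^ 2 * (S.lam - 1) ∧
    ∀ s : Setoid P,
      (∀ (g : G) (x y : P), s.r x y → s.r (g • x) (g • y)) →
      (∀ x y : P, s.r x y → S.proj x = S.proj y) →
      (∃ x y : P, x ≠ y ∧ s.r x y) →
      ∀ x y : P, s.r x y ↔ S.proj x = S.proj y

/-- The quotient structure `D₁` is a 2-design with parameters `(v₁, k₁, λ₁)`,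
where `λ₁ = v₀²λ/(k₀²η)`, with replication number `r₁ = (v₁−1)λ₁/(k₁−1)`:
any two distinct classes are met simultaneously by exactly `λ₁ · η` blocks. -/
def QuotientTwoDesign : Prop :=
  (∀ q q' : Q, q ≠ q' →
    (univ.filter fun i : ι => q ∈ S.trace i ∧ q' ∈ S.trace i).card = S.lam₁ * S.η) ∧
  S.lam₁ * (S.k₀ ^ 2 * S.η) = S.v₀ ^ 2 * S.lam ∧
  S.r₁ * (S.k₁ - 1) = S.lam₁ * (S.v₁ - 1)

/-- The quotient structure `D₁` is a symmetric 1-design with `k₁ = v₁ − 1`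
(in particular it has exactly `v₁` distinct blocks, namely the distinct traces). -/
def QuotientSymm1Design : Prop :=
  S.k₁ = S.v₁ - 1 ∧ (univ.image fun i : ι => S.trace i).card = S.v₁

/-- **Hypothesis 3/2**: Hypothesis 1 holds and `D₁` is a 2-`(v₁, k₁, λ₁)` design,
not a symmetric 1-design with `k₁ = v₁ − 1`. -/
def Hyp32 : Prop := S.Hyp1 ∧ S.QuotientTwoDesign ∧ ¬ S.QuotientSymm1Design

/-- **Hypothesis 2**: Hypothesis 3/2 holds, `r > k` and `λ > 3`. -/
def Hyp2 : Prop := S.Hyp32 ∧ S.k < S.r ∧ 3 < S.lam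

/-- `D₁` is of type I: `k₁ = (k₁, v₁) · (k₁, r/λ) · λ`. -/
def TypeI : Prop := S.k₁ = Nat.gcd S.k₁ S.v₁ * Nat.gcd S.k₁ (S.r / S.lam) * S.lam

/-- `D₁` is of type II: `k₁ = (k₁, v₁) · (k₁, r/λ)`. -/
def TypeII : Prop := S.k₁ = Nat.gcd S.k₁ S.v₁ * Nat.gcd S.k₁ (S.r / S.lam)

/-- `D₁` is of type Ia: type I, and `λ` divides none of `v₀(v₀−1)`, `v₁(v₁−1)`,
`v(v−1)`. -/
def TypeIa : Prop :=
  S.TypeI ∧ ¬ S.lam ∣ S.v₀ * (S.v₀ - 1) ∧ ¬ S.lam ∣ S.v₁ * (S.v₁ - 1) ∧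
    ¬ S.lam ∣ S.v * (S.v - 1)

/-- `D₁` is of type Ic: type I, and
`(v₀, k₀, v₁, k₁) = ((λ²+λ+2)/2, 2, (λ−1)(λ²−2)/2, λ²(λ−1)/4)`. -/
def TypeIc : Prop :=
  S.TypeI ∧ S.k₀ = 2 ∧ 2 * S.v₀ = S.lam ^ 2 + S.lam + 2 ∧
    2 * S.v₁ = (S.lam - 1) * (S.lam ^ 2 - 2) ∧ 4 * S.k₁ = S.lam ^ 2 * (S.lam - 1)

/-- `D₁` is of type IIb: type II and `λ > v₀`. -/
def TypeIIb : Prop := S.TypeII ∧ S.v₀ < S.lam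

/-- The permutation of the class `Δ = {x : P // proj x = q}` induced by an element
of the (setwise) stabiliser `G_Δ` of the class. -/
def classPerm (q : Q) (g : MulAction.stabilizer G q) :
    Equiv.Perm {x : P // S.proj x = q} where
  toFun x := ⟨(g : G) • (x : P), by
    rw [S.proj_equivariant, x.2]
    exact MulAction.mem_stabilizer_iff.mp g.2⟩
  invFun x := ⟨(g : G)⁻¹ • (x : P), by
    rw [S.proj_equivariant, x.2, inv_smul_eq_iff]
    exact (MulAction.mem_stabilizer_iff.mp g.2).symm⟩
  left_inv x := Subtype.ext (inv_smul_smul _ _)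
  right_inv x := Subtype.ext (smul_inv_smul _ _)

/-- The natural homomorphism from the stabiliser `G_Δ` of a class `Δ` of `Σ` to the
symmetric group on `Δ`; its range is the induced group `G_Δ^Δ`. -/
def classHom (q : Q) :
    MulAction.stabilizer G q →* Equiv.Perm {x : P // S.proj x = q} where
  toFun := S.classPerm q
  map_one' := by
    apply Equiv.ext
    intro x
    apply Subtype.ext
    show ((1 : MulAction.stabilizer G q) : G) • (x : P) = (x : P)
    simp
  map_mul' g h := by
    apply Equiv.ext
    intro x
    apply Subtype.ext
    show ((g * h : MulAction.stabilizer G q) : G) • (x : P) =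
      (g : G) • ((h : G) • (x : P))
    simp [mul_smul]

end Setting

namespace Setting

variable (S : Setting P ι Q G)


private lemma dcNat {α β : Type*} [Fintype α] [Fintype β] (p : α → β → Prop)
    [∀ a b, Decidable (p a b)] :
    ∑ a : α, (univ.filter fun b => p a b).card
      = ∑ b : β, (univ.filter fun a => p a b).card := by
  simp_rw [Finset.card_filter]
  exact Finset.sum_comm

private lemma v_eq : S.v = S.v₀ * S.v₁ := by
  have h : (univ : Finset P).card = ∑ q : Q, (univ.filter fun x : P => S.proj x = q).card :=
    Finset.card_eq_sum_card_fiberwise fun x _ => Finset.mem_univ _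
  simp only [S.fiber_card, Finset.sum_const, smul_eq_mul, Finset.card_univ,
    S.card_points, S.card_classes] at h
  rw [h, Nat.mul_comm]

private lemma bk_eq : S.b * S.k = S.v * S.r := by
  have h := dcNat (fun (i : ι) (x : P) => x ∈ S.blk i)
  have h1 : ∀ i : ι, (univ.filter fun x : P => x ∈ S.blk i) = S.blk i := by
    intro i; ext x; simp
  simp only [h1, S.blk_card, S.rep_count, Finset.sum_const, smul_eq_mul,
    Finset.card_univ, S.card_points, S.card_blocks] at h
  exact h

private lemma fiber_card_of_mem {i : ι} {q : Q} {z : P} (hz : z ∈ S.blk i)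
    (hq : S.proj z = q) :
    ((S.blk i).filter fun w : P => S.proj w = q).card = S.k₀ := by
  rcases S.blk_fiber_card i q with h0 | h0
  · exfalso
    have hmem : z ∈ (S.blk i).filter fun w : P => S.proj w = q := by
      simp [hz, hq]
    have := Finset.card_pos.mpr ⟨z, hmem⟩
    omega
  · exact h0

private lemma rk_eq (x : P) : S.r * (S.k - 1) = S.lam * (S.v - 1) := by
  have h := dcNat (fun (i : ι) (y : P) => x ∈ S.blk i ∧ y ∈ S.blk i ∧ y ≠ x)
  have hL : ∑ i : ι, (univ.filter fun y : P => x ∈ S.blk i ∧ y ∈ S.blk i ∧ y ≠ x).card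
      = S.r * (S.k - 1) := by
    have hterm : ∀ i : ι, (univ.filter fun y : P => x ∈ S.blk i ∧ y ∈ S.blk i ∧ y ≠ x).card
        = if x ∈ S.blk i then S.k - 1 else 0 := by
      intro i
      by_cases hx : x ∈ S.blk i
      · rw [if_pos hx]
        have he : (univ.filter fun y : P => x ∈ S.blk i ∧ y ∈ S.blk i ∧ y ≠ x)
            = (S.blk i).erase x := by
          ext y
          simp only [Finset.mem_filter, Finset.mem_univ, true_and, Finset.mem_erase]
          tauto
        rw [he, Finset.card_erase_of_mem hx, S.blk_card]
      · rw [if_neg hx]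
        rw [Finset.card_eq_zero, Finset.filter_eq_empty_iff]
        intro y _
        tauto
    simp only [hterm]
    rw [← Finset.sum_filter, Finset.sum_const, smul_eq_mul, S.rep_count x]
  have hR : ∑ y : P, (univ.filter fun i : ι => x ∈ S.blk i ∧ y ∈ S.blk i ∧ y ≠ x).card
      = S.lam * (S.v - 1) := by
    have hterm : ∀ y : P, (univ.filter fun i : ι => x ∈ S.blk i ∧ y ∈ S.blk i ∧ y ≠ x).card
        = if y ≠ x then S.lam else 0 := by
      intro y
      by_cases hy : y = x
      · subst hy; simp
      · rw [if_pos hy]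
        rw [← S.pair_count x y (fun hxy => hy hxy.symm)]
        congr 1
        ext i
        simp only [Finset.mem_filter, Finset.mem_univ, true_and]
        tauto
    simp only [hterm]
    rw [← Finset.sum_filter, Finset.sum_const, smul_eq_mul]
    have he : (univ.filter fun y : P => y ≠ x) = univ.erase x := by
      ext y; simp [Finset.mem_erase]
    rw [he, Finset.card_erase_of_mem (Finset.mem_univ x), Finset.card_univ, S.card_points,
      Nat.mul_comm]
  rw [hL, hR] at h
  exact h

private lemma rk0_eq (x : P) : S.r * (S.k₀ - 1) = S.lam * (S.v₀ - 1) := by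
  have h := dcNat (fun (i : ι) (y : P) =>
    x ∈ S.blk i ∧ y ∈ S.blk i ∧ S.proj y = S.proj x ∧ y ≠ x)
  have hL : ∑ i : ι, (univ.filter fun y : P =>
        x ∈ S.blk i ∧ y ∈ S.blk i ∧ S.proj y = S.proj x ∧ y ≠ x).card
      = S.r * (S.k₀ - 1) := by
    have hterm : ∀ i : ι, (univ.filter fun y : P =>
          x ∈ S.blk i ∧ y ∈ S.blk i ∧ S.proj y = S.proj x ∧ y ≠ x).card
        = if x ∈ S.blk i then S.k₀ - 1 else 0 := by
      intro i
      by_cases hx : x ∈ S.blk i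
      · rw [if_pos hx]
        have he : (univ.filter fun y : P =>
              x ∈ S.blk i ∧ y ∈ S.blk i ∧ S.proj y = S.proj x ∧ y ≠ x)
            = ((S.blk i).filter fun w : P => S.proj w = S.proj x).erase x := by
          ext y
          simp only [Finset.mem_filter, Finset.mem_univ, true_and, Finset.mem_erase]
          tauto
        rw [he, Finset.card_erase_of_mem (by simp [hx]),
          S.fiber_card_of_mem hx rfl]
      · rw [if_neg hx]
        rw [Finset.card_eq_zero, Finset.filter_eq_empty_iff]
        intro y _
        tauto
    simp only [hterm]
    rw [← Finset.sum_filter, Finset.sum_const, smul_eq_mul, S.rep_count x]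
  have hR : ∑ y : P, (univ.filter fun i : ι =>
        x ∈ S.blk i ∧ y ∈ S.blk i ∧ S.proj y = S.proj x ∧ y ≠ x).card
      = S.lam * (S.v₀ - 1) := by
    have hterm : ∀ y : P, (univ.filter fun i : ι =>
          x ∈ S.blk i ∧ y ∈ S.blk i ∧ S.proj y = S.proj x ∧ y ≠ x).card
        = if S.proj y = S.proj x ∧ y ≠ x then S.lam else 0 := by
      intro y
      by_cases hy : S.proj y = S.proj x ∧ y ≠ x
      · rw [if_pos hy]
        rw [← S.pair_count x y (fun hxy => hy.2 hxy.symm)]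
        congr 1
        ext i
        simp only [Finset.mem_filter, Finset.mem_univ, true_and]
        tauto
      · rw [if_neg hy]
        rw [Finset.card_eq_zero, Finset.filter_eq_empty_iff]
        intro i _
        tauto
    simp only [hterm]
    rw [← Finset.sum_filter, Finset.sum_const, smul_eq_mul]
    have he : (univ.filter fun y : P => S.proj y = S.proj x ∧ y ≠ x)
        = (univ.filter fun y : P => S.proj y = S.proj x).erase x := by
      ext y
      simp only [Finset.mem_filter, Finset.mem_univ, true_and, Finset.mem_erase]
      tauto
    rw [he, Finset.card_erase_of_mem (by simp), S.fiber_card, Nat.mul_comm]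
  rw [hL, hR] at h
  exact h

private lemma k₀_le_v₀ (i : ι) : S.k₀ ≤ S.v₀ := by
  have hk : 0 < S.k := by have := S.two_lt_k; omega
  have hbne : (S.blk i).Nonempty := Finset.card_pos.mp (by rw [S.blk_card]; exact hk)
  obtain ⟨z, hz⟩ := hbne
  have h1 := S.fiber_card_of_mem hz rfl
  have h2 : ((S.blk i).filter fun w : P => S.proj w = S.proj z)
      ⊆ univ.filter fun w : P => S.proj w = S.proj z :=
    Finset.filter_subset_filter _ (Finset.subset_univ _)
  have := Finset.card_le_card h2
  rw [h1, S.fiber_card] at this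
  exact this



private lemma meet_eq (x : P) (q' : Q) (hq' : q' ≠ S.proj x) :
    S.k₀ * (univ.filter fun i : ι =>
        x ∈ S.blk i ∧ ((S.blk i).filter fun z : P => S.proj z = q').Nonempty).card
      = S.v₀ * S.lam := by
  have h := dcNat (fun (i : ι) (y : P) => x ∈ S.blk i ∧ y ∈ S.blk i ∧ S.proj y = q')
  have hL : ∑ i : ι, (univ.filter fun y : P =>
        x ∈ S.blk i ∧ y ∈ S.blk i ∧ S.proj y = q').card
      = S.k₀ * (univ.filter fun i : ι =>
        x ∈ S.blk i ∧ ((S.blk i).filter fun z : P => S.proj z = q').Nonempty).card := by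
    have hterm : ∀ i : ι, (univ.filter fun y : P =>
          x ∈ S.blk i ∧ y ∈ S.blk i ∧ S.proj y = q').card
        = if x ∈ S.blk i ∧ ((S.blk i).filter fun z : P => S.proj z = q').Nonempty
          then S.k₀ else 0 := by
      intro i
      by_cases hx : x ∈ S.blk i
      · have he : (univ.filter fun y : P => x ∈ S.blk i ∧ y ∈ S.blk i ∧ S.proj y = q')
            = (S.blk i).filter fun z : P => S.proj z = q' := by
          ext y
          simp only [Finset.mem_filter, Finset.mem_univ, true_and]
          tauto
        rw [he]
        by_cases hne : ((S.blk i).filter fun z : P => S.proj z = q').Nonempty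
        · rw [if_pos ⟨hx, hne⟩]
          obtain ⟨z, hzmem⟩ := hne
          simp only [Finset.mem_filter] at hzmem
          exact S.fiber_card_of_mem hzmem.1 hzmem.2
        · rw [if_neg (fun hc : _ ∧ _ => hne hc.2)]
          rw [Finset.not_nonempty_iff_eq_empty] at hne
          rw [hne, Finset.card_empty]
      · rw [if_neg (fun hc => hx hc.1)]
        rw [Finset.card_eq_zero, Finset.filter_eq_empty_iff]
        intro y _
        tauto
    simp only [hterm]
    rw [← Finset.sum_filter, Finset.sum_const, smul_eq_mul, Nat.mul_comm]
  have hR : ∑ y : P, (univ.filter fun i : ι =>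
        x ∈ S.blk i ∧ y ∈ S.blk i ∧ S.proj y = q').card
      = S.v₀ * S.lam := by
    have hterm : ∀ y : P, (univ.filter fun i : ι =>
          x ∈ S.blk i ∧ y ∈ S.blk i ∧ S.proj y = q').card
        = if S.proj y = q' then S.lam else 0 := by
      intro y
      by_cases hy : S.proj y = q'
      · rw [if_pos hy]
        have hyx : x ≠ y := by
          intro hc
          rw [← hc] at hy
          exact hq' hy.symm
        rw [← S.pair_count x y hyx]
        congr 1
        ext i
        simp only [Finset.mem_filter, Finset.mem_univ, true_and]
        tauto
      · rw [if_neg hy]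
        rw [Finset.card_eq_zero, Finset.filter_eq_empty_iff]
        intro i _
        tauto
    simp only [hterm]
    rw [← Finset.sum_filter, Finset.sum_const, smul_eq_mul, S.fiber_card]
  rw [hL, hR] at h
  exact h

private lemma split_eq (x : P) (q' : Q) :
    (univ.filter fun i : ι =>
        x ∈ S.blk i ∧ ((S.blk i).filter fun z : P => S.proj z = q').Nonempty).card
      + (univ.filter fun i : ι =>
        x ∈ S.blk i ∧ ¬ ((S.blk i).filter fun z : P => S.proj z = q').Nonempty).card
      = S.r := by
  rw [← S.rep_count x]
  have h1 : (univ.filter fun i : ι =>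
        x ∈ S.blk i ∧ ((S.blk i).filter fun z : P => S.proj z = q').Nonempty)
      = (univ.filter fun i : ι => x ∈ S.blk i).filter
        (fun i : ι => ((S.blk i).filter fun z : P => S.proj z = q').Nonempty) := by
    rw [Finset.filter_filter]
  have h2 : (univ.filter fun i : ι =>
        x ∈ S.blk i ∧ ¬ ((S.blk i).filter fun z : P => S.proj z = q').Nonempty)
      = (univ.filter fun i : ι => x ∈ S.blk i).filter
        (fun i : ι => ¬ ((S.blk i).filter fun z : P => S.proj z = q').Nonempty) := by
    rw [Finset.filter_filter]
  rw [h1, h2, Finset.card_filter_add_card_filter_not]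

private lemma miss_sum (x : P) (hk₁ : S.k₁ = S.v₁ - 1) :
    S.r = ∑ q'' ∈ univ.erase (S.proj x), (univ.filter fun i : ι =>
        x ∈ S.blk i ∧ ¬ ((S.blk i).filter fun z : P => S.proj z = q'').Nonempty).card := by
  have h := dcNat (fun (i : ι) (q'' : Q) =>
    x ∈ S.blk i ∧ q'' ≠ S.proj x ∧ ¬ ((S.blk i).filter fun z : P => S.proj z = q'').Nonempty)
  have hL : ∑ i : ι, (univ.filter fun q'' : Q =>
        x ∈ S.blk i ∧ q'' ≠ S.proj x
          ∧ ¬ ((S.blk i).filter fun z : P => S.proj z = q'').Nonempty).card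
      = S.r := by
    have hterm : ∀ i : ι, (univ.filter fun q'' : Q =>
          x ∈ S.blk i ∧ q'' ≠ S.proj x
            ∧ ¬ ((S.blk i).filter fun z : P => S.proj z = q'').Nonempty).card
        = if x ∈ S.blk i then 1 else 0 := by
      intro i
      by_cases hx : x ∈ S.blk i
      · rw [if_pos hx]
        have hprojmem : (S.proj x) ∈ univ.filter fun q : Q =>
            ((S.blk i).filter fun z : P => S.proj z = q).Nonempty := by
          simp only [Finset.mem_filter, Finset.mem_univ, true_and]
          exact ⟨x, by simp [hx]⟩
        have he : (univ.filter fun q'' : Q =>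
              x ∈ S.blk i ∧ q'' ≠ S.proj x
                ∧ ¬ ((S.blk i).filter fun z : P => S.proj z = q'').Nonempty)
            = univ \ (univ.filter fun q : Q =>
              ((S.blk i).filter fun z : P => S.proj z = q).Nonempty) := by
          ext q''
          simp only [Finset.mem_filter, Finset.mem_univ, true_and, Finset.mem_sdiff]
          constructor
          · intro hc
            exact hc.2.2
          · intro hc
            refine ⟨hx, ?_, hc⟩
            intro hceq
            rw [hceq] at hc
            exact hc ⟨x, by simp [hx]⟩
        rw [he, Finset.card_sdiff_of_subset (Finset.filter_subset _ _)]
        have ht := S.trace_card i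
        rw [ht, Finset.card_univ, S.card_classes, hk₁]
        have := S.one_lt_v₁
        omega
      · rw [if_neg hx]
        rw [Finset.card_eq_zero, Finset.filter_eq_empty_iff]
        intro q'' _
        tauto
    simp only [hterm]
    rw [← Finset.sum_filter, Finset.sum_const, smul_eq_mul, S.rep_count x, Nat.mul_one]
  have hR : ∑ q'' : Q, (univ.filter fun i : ι =>
        x ∈ S.blk i ∧ q'' ≠ S.proj x
          ∧ ¬ ((S.blk i).filter fun z : P => S.proj z = q'').Nonempty).card
      = ∑ q'' ∈ univ.erase (S.proj x), (univ.filter fun i : ι =>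
        x ∈ S.blk i ∧ ¬ ((S.blk i).filter fun z : P => S.proj z = q'').Nonempty).card := by
    rw [← Finset.sum_erase (univ : Finset Q) (f := fun q'' : Q => (univ.filter fun i : ι =>
        x ∈ S.blk i ∧ q'' ≠ S.proj x
          ∧ ¬ ((S.blk i).filter fun z : P => S.proj z = q'').Nonempty).card) (a := S.proj x)
      (by rw [Finset.card_eq_zero, Finset.filter_eq_empty_iff]; intro i _; simp)]
    apply Finset.sum_congr rfl
    intro q'' hq''
    have hne : q'' ≠ S.proj x := (Finset.mem_erase.mp hq'').1
    congr 1
    ext i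
    simp only [Finset.mem_filter, Finset.mem_univ, true_and]
    tauto
  rw [hL, hR] at h
  exact h

private lemma miss_count_eq (x : P) (q' : Q) (hq' : q' ≠ S.proj x) :
    S.v₀ * S.lam + S.k₀ * (univ.filter fun i : ι =>
        x ∈ S.blk i ∧ ¬ ((S.blk i).filter fun z : P => S.proj z = q').Nonempty).card
      = S.k₀ * S.r := by
  have EM2 := S.meet_eq x q' hq'
  have EMm2 := S.split_eq x q'
  set A := (univ.filter fun i : ι =>
      x ∈ S.blk i ∧ ((S.blk i).filter fun z : P => S.proj z = q').Nonempty).card with hA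
  set B := (univ.filter fun i : ι =>
      x ∈ S.blk i ∧ ¬ ((S.blk i).filter fun z : P => S.proj z = q').Nonempty).card with hB
  have h : S.k₀ * (A + B) = S.k₀ * S.r := by rw [EMm2]
  rw [Nat.mul_add, EM2] at h
  exact h

private lemma miss_const (x : P) (hk₁ : S.k₁ = S.v₁ - 1) (q' : Q) (hq' : q' ≠ S.proj x) :
    S.r = (S.v₁ - 1) * (univ.filter fun i : ι =>
        x ∈ S.blk i ∧ ¬ ((S.blk i).filter fun z : P => S.proj z = q').Nonempty).card := by
  have hk₀pos : 0 < S.k₀ := by have := S.two_le_k₀; omega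
  have hsum := S.miss_sum x hk₁
  have hconst : ∀ q₁ ∈ univ.erase (S.proj x),
      (univ.filter fun i : ι =>
        x ∈ S.blk i ∧ ¬ ((S.blk i).filter fun z : P => S.proj z = q₁).Nonempty).card
      = (univ.filter fun i : ι =>
        x ∈ S.blk i ∧ ¬ ((S.blk i).filter fun z : P => S.proj z = q').Nonempty).card := by
    intro q₁ hq₁
    have h1 := S.miss_count_eq x q₁ (Finset.mem_erase.mp hq₁).1
    have h2 := S.miss_count_eq x q' hq'
    exact Nat.eq_of_mul_eq_mul_left hk₀pos (Nat.add_left_cancel (h1.trans h2.symm))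
  rw [Finset.sum_congr rfl hconst, Finset.sum_const, smul_eq_mul,
    Finset.card_erase_of_mem (Finset.mem_univ _), Finset.card_univ, S.card_classes] at hsum
  exact hsum


private lemma fisher (hlr : S.lam < S.r) : S.v ≤ S.b := by
  classical
  set f : P → ι → ℚ := fun x i => if x ∈ S.blk i then 1 else 0 with hf
  have hw : ∀ x y : P, ∑ i : ι, f x i * f y i
      = if x = y then (S.r : ℚ) else (S.lam : ℚ) := by
    intro x y
    have hterm : ∀ i : ι, f x i * f y i
        = if x ∈ S.blk i ∧ y ∈ S.blk i then (1 : ℚ) else 0 := by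
      intro i
      simp only [hf]
      by_cases h1 : x ∈ S.blk i <;> by_cases h2 : y ∈ S.blk i <;> simp [h1, h2]
    simp only [hterm, Finset.sum_boole]
    by_cases hxy : x = y
    · subst hxy
      rw [if_pos rfl]
      have : (univ.filter fun i : ι => x ∈ S.blk i ∧ x ∈ S.blk i)
          = univ.filter fun i : ι => x ∈ S.blk i := by
        congr 1
        ext i
        tauto
      rw [this, S.rep_count x]
    · rw [if_neg hxy, S.pair_count x y hxy]
  have hli : LinearIndependent ℚ f := by
    rw [Fintype.linearIndependent_iff]
    intro c hc
    have hc' : ∀ i : ι, ∑ x : P, c x * f x i = 0 := by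
      intro i
      have := congrFun hc i
      simpa [Finset.sum_apply] using this
    have key : ∀ y : P, (S.lam : ℚ) * (∑ x : P, c x) + ((S.r : ℚ) - S.lam) * c y = 0 := by
      intro y
      have h0 : ∑ i : ι, (∑ x : P, c x * f x i) * f y i = 0 := by
        simp [hc']
      have h1 : ∑ i : ι, (∑ x : P, c x * f x i) * f y i
          = ∑ x : P, c x * (if x = y then (S.r : ℚ) else (S.lam : ℚ)) := by
        simp_rw [Finset.sum_mul]
        rw [Finset.sum_comm]
        simp_rw [mul_assoc, ← Finset.mul_sum, hw]
      have h2 : ∑ x : P, c x * (if x = y then (S.r : ℚ) else (S.lam : ℚ))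
          = (S.lam : ℚ) * (∑ x : P, c x) + ((S.r : ℚ) - S.lam) * c y := by
        have hsplit : ∀ x : P, c x * (if x = y then (S.r : ℚ) else (S.lam : ℚ))
            = (S.lam : ℚ) * c x + (if x = y then ((S.r : ℚ) - S.lam) * c x else 0) := by
          intro x
          by_cases hxy : x = y <;> simp [hxy] <;> ring
        simp_rw [hsplit]
        rw [Finset.sum_add_distrib, Finset.sum_ite_eq' univ y
          (fun x : P => ((S.r : ℚ) - S.lam) * c x), if_pos (Finset.mem_univ y),
          ← Finset.mul_sum]
      rw [h1, h2] at h0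
      exact h0
    have hrpos : (0 : ℚ) < (S.r : ℚ) - S.lam := by
      have : (S.lam : ℚ) < (S.r : ℚ) := by exact_mod_cast hlr
      linarith
    have hsum : ∑ x : P, c x = 0 := by
      have htot : ∑ y : P, ((S.lam : ℚ) * (∑ x : P, c x) + ((S.r : ℚ) - S.lam) * c y) = 0 := by
        have h := Finset.sum_congr rfl fun y (_ : y ∈ (univ : Finset P)) => key y
        simpa using h
      rw [Finset.sum_add_distrib, Finset.sum_const, nsmul_eq_mul, ← Finset.mul_sum] at htot
      have hfac : (∑ x : P, c x)
          * (((univ : Finset P).card : ℚ) * S.lam + ((S.r : ℚ) - S.lam)) = 0 := by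
        linear_combination htot
      have hpos : (0 : ℚ) < ((univ : Finset P).card : ℚ) * S.lam + ((S.r : ℚ) - S.lam) :=
        add_pos_of_nonneg_of_pos (by positivity) hrpos
      exact (mul_eq_zero.mp hfac).resolve_right (ne_of_gt hpos)
    intro y
    have hk := key y
    rw [hsum, mul_zero, zero_add] at hk
    rcases mul_eq_zero.mp hk with hc0 | hc0
    · exact absurd hc0 (ne_of_gt hrpos)
    · exact hc0
  have hcards := hli.fintype_card_le_finrank
  rw [Module.finrank_pi, S.card_points, S.card_blocks] at hcards
  exact hcards



private lemma arith {k₀ v₀ v₁ lam s M m r : ℕ}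
    (hk₀ : 2 ≤ k₀) (hv₁ : 1 < v₁) (hp : lam.Prime)
    (hr : r = lam * s)
    (Eb : r * (k₀ - 1) = lam * (v₀ - 1))
    (hk₀v₀ : k₀ ≤ v₀)
    (EM : k₀ * M = v₀ * lam) (EMm : M + m = r) (Em : r = (v₁ - 1) * m)
    (hrk : k₀ * (v₁ - 1) ≤ r) :
    v₀ = k₀ ^ 2 ∧ v₁ = k₀ + 2 ∧ s = k₀ + 1 ∧ k₀ ≤ lam := by
  have hlam0 : 0 < lam := hp.pos
  set n := v₁ - 1 with hn
  have hn0 : 0 < n := by omega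
  have hs1 : s * (k₀ - 1) = v₀ - 1 := by
    apply Nat.eq_of_mul_eq_mul_left hlam0
    calc lam * (s * (k₀ - 1)) = lam * s * (k₀ - 1) := by ring
      _ = r * (k₀ - 1) := by rw [hr]
      _ = lam * (v₀ - 1) := Eb
  have hv₀2 : 1 < v₀ := by omega
  have hs0 : 0 < s := by
    rcases Nat.eq_zero_or_pos s with h0 | h0
    · exfalso; rw [h0, Nat.zero_mul] at hs1; omega
    · exact h0
  have hv₀s : v₀ + s = s * k₀ + 1 := by
    have h1 : s * k₀ = s * (k₀ - 1) + s := by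
      have h2 : k₀ - 1 + 1 = k₀ := by omega
      calc s * k₀ = s * ((k₀ - 1) + 1) := by rw [h2]
        _ = s * (k₀ - 1) + s := by ring
    rw [h1, hs1]
    omega
  have E2 : k₀ * r = v₀ * lam + k₀ * m := by
    have h1 : k₀ * (M + m) = k₀ * r := congrArg (k₀ * ·) EMm
    rw [Nat.mul_add, EM] at h1
    exact h1.symm
  have E3 : k₀ * r * n = n * (v₀ * lam) + k₀ * r := by
    calc k₀ * r * n = n * (k₀ * r) := by ring
      _ = n * (v₀ * lam + k₀ * m) := by rw [E2]
      _ = n * (v₀ * lam) + k₀ * (n * m) := by ring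
      _ = n * (v₀ * lam) + k₀ * r := by rw [← Em]
  have E4 : k₀ * s * n = n * v₀ + k₀ * s := by
    apply Nat.eq_of_mul_eq_mul_left hlam0
    calc lam * (k₀ * s * n) = k₀ * (lam * s) * n := by ring
      _ = k₀ * r * n := by rw [hr]
      _ = n * (v₀ * lam) + k₀ * r := E3
      _ = n * (v₀ * lam) + k₀ * (lam * s) := by rw [hr]
      _ = lam * (n * v₀ + k₀ * s) := by ring
  have E5 : n * s = n + k₀ * s := by
    have h2 : n * v₀ + n * s = n * s * k₀ + n := by
      calc n * v₀ + n * s = n * (v₀ + s) := by ring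
        _ = n * (s * k₀ + 1) := by rw [hv₀s]
        _ = n * s * k₀ + n := by ring
    have h3 : n * s * k₀ + (n * s) = n * s * k₀ + (n + k₀ * s) := by
      calc n * s * k₀ + (n * s) = k₀ * s * n + n * s := by ring
        _ = (n * v₀ + k₀ * s) + n * s := by rw [E4]
        _ = (n * v₀ + n * s) + k₀ * s := by ring
        _ = (n * s * k₀ + n) + k₀ * s := by rw [h2]
        _ = n * s * k₀ + (n + k₀ * s) := by ring
    exact Nat.add_left_cancel h3
  have hnk : k₀ < n := by
    by_contra hle
    push_neg at hle
    have h1 : n * s ≤ k₀ * s := Nat.mul_le_mul_right s hle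
    rw [E5] at h1
    omega
  have Et : (n - k₀) * s = n := by
    rw [Nat.sub_mul, E5, Nat.add_sub_cancel]
  have hdvd : (n - k₀) ∣ lam := by
    have h1 : n ∣ lam * s := ⟨m, by rw [← hr, Em]⟩
    rw [← Et] at h1
    exact (Nat.mul_dvd_mul_iff_right hs0).mp h1
  have ht1 : n - k₀ = 1 := by
    rcases (Nat.Prime.eq_one_or_self_of_dvd hp (n - k₀) hdvd) with h1 | h1
    · exact h1
    · exfalso
      have h2 : r = n := by rw [hr, ← h1, Et]
      rw [h2] at hrk
      have h3 : k₀ * n ≤ 1 * n := by rw [Nat.one_mul]; exact hrk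
      have h4 : k₀ ≤ 1 := Nat.le_of_mul_le_mul_right h3 hn0
      omega
  have hneq : n = k₀ + 1 := by omega
  have hseq : s = k₀ + 1 := by
    have := Et
    rw [ht1, Nat.one_mul] at this
    omega
  have hv₀eq : v₀ = k₀ ^ 2 := by
    have h1 : v₀ + s = k₀ ^ 2 + s := by
      rw [hv₀s, hseq]
      ring
    exact Nat.add_right_cancel h1
  have hlamk : k₀ ≤ lam := by
    have h1 : k₀ * (k₀ + 1) ≤ lam * (k₀ + 1) := by
      calc k₀ * (k₀ + 1) = k₀ * n := by rw [hneq]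
        _ ≤ r := hrk
        _ = lam * s := hr
        _ = lam * (k₀ + 1) := by rw [hseq]
    exact Nat.le_of_mul_le_mul_right h1 (by omega)
  exact ⟨hv₀eq, by omega, hseq, hlamk⟩

private lemma mu_partition (q : Q) (F : Finset ι)
    (h1 : ∀ i ∈ F, ((S.blk i).filter fun z : P => S.proj z = q).Nonempty)
    (h2 : ∀ i ∈ F, ∀ j : ι,
      ((S.blk j).filter fun z : P => S.proj z = q)
        = ((S.blk i).filter fun z : P => S.proj z = q) → j ∈ F) :
    F.card = S.μ * (F.image fun i => S.fiberTrace i q).card := by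
  rw [Finset.card_eq_sum_card_image (fun i => S.fiberTrace i q) F]
  have hterm : ∀ C ∈ F.image fun i => S.fiberTrace i q,
      (F.filter fun j => S.fiberTrace j q = C).card = S.μ := by
    intro C hC
    obtain ⟨i, hiF, hiC⟩ := Finset.mem_image.mp hC
    have hfi : ∀ j : ι, S.fiberTrace j q = (S.blk j).filter fun z : P => S.proj z = q :=
      fun j => rfl
    rw [← S.mu_count i q (h1 i hiF)]
    congr 1
    ext j
    simp only [Finset.mem_filter, Finset.mem_univ, true_and]
    constructor
    · rintro ⟨hjF, hjC⟩
      rw [← hiC, hfi, hfi] at hjC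
      exact hjC
    · intro hj
      refine ⟨h2 i hiF j hj, ?_⟩
      rw [← hiC, hfi, hfi]
      exact hj
  rw [Finset.sum_congr rfl hterm, Finset.sum_const, smul_eq_mul, Nat.mul_comm]

private lemma class_meet (q : Q) :
    S.k₀ * (univ.filter fun i : ι =>
        ((S.blk i).filter fun z : P => S.proj z = q).Nonempty).card
      = S.v₀ * S.r := by
  have h := dcNat (fun (i : ι) (y : P) => y ∈ S.blk i ∧ S.proj y = q)
  have hL : ∑ i : ι, (univ.filter fun y : P => y ∈ S.blk i ∧ S.proj y = q).card
      = S.k₀ * (univ.filter fun i : ι =>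
        ((S.blk i).filter fun z : P => S.proj z = q).Nonempty).card := by
    have hterm : ∀ i : ι, (univ.filter fun y : P => y ∈ S.blk i ∧ S.proj y = q).card
        = if ((S.blk i).filter fun z : P => S.proj z = q).Nonempty then S.k₀ else 0 := by
      intro i
      have he : (univ.filter fun y : P => y ∈ S.blk i ∧ S.proj y = q)
          = (S.blk i).filter fun z : P => S.proj z = q := by
        ext y
        simp only [Finset.mem_filter, Finset.mem_univ, true_and]
      rw [he]
      by_cases hne : ((S.blk i).filter fun z : P => S.proj z = q).Nonempty
      · rw [if_pos hne]
        obtain ⟨z, hz⟩ := hne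
        simp only [Finset.mem_filter] at hz
        exact S.fiber_card_of_mem hz.1 hz.2
      · rw [if_neg hne]
        rw [Finset.not_nonempty_iff_eq_empty] at hne
        rw [hne, Finset.card_empty]
    simp only [hterm]
    rw [← Finset.sum_filter, Finset.sum_const, smul_eq_mul, Nat.mul_comm]
  have hR : ∑ y : P, (univ.filter fun i : ι => y ∈ S.blk i ∧ S.proj y = q).card
      = S.v₀ * S.r := by
    have hterm : ∀ y : P, (univ.filter fun i : ι => y ∈ S.blk i ∧ S.proj y = q).card
        = if S.proj y = q then S.r else 0 := by
      intro y
      by_cases hy : S.proj y = q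
      · rw [if_pos hy, ← S.rep_count y]
        congr 1
        ext i
        simp only [Finset.mem_filter, Finset.mem_univ, true_and]
        tauto
      · rw [if_neg hy]
        rw [Finset.card_eq_zero, Finset.filter_eq_empty_iff]
        intro i _
        tauto
    simp only [hterm]
    rw [← Finset.sum_filter, Finset.sum_const, smul_eq_mul, S.fiber_card]
  rw [hL, hR] at h
  exact h


end Setting

/-- Lemma 3.3 of the paper. Assume Hypothesis 1 and that the
quotient structure `D₁` is a symmetric 1-design with `k₁ = v₁ − 1`.  Then
`v₀ = k₀²`, `v₁ = k₀ + 2`, `v = k₀²(k₀+2)`, `k = k₀(k₀+1)`, `r = (k₀+1)λ`,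
`b = k₀(k₀+2)λ`, and for `D₀` one has `λ₀ = λ/μ` (the number of distinct traces
through two distinct points of a class), `r₀ = (k₀+1)·λ/μ` (the number of distinct
traces through a point of a class) and `b₀ = k₀(k₀+1)·λ/μ` (the number of distinct
nonempty traces on a class).  In particular `λ ≥ k₀`, and `λ = k₀` iff `D` is a
symmetric 2-design (`v = b`). -/
theorem statement_5 (S : Setting P ι Q G) (h : S.Hyp1)
    (hsym : S.QuotientSymm1Design) :
    S.v₀ = S.k₀ ^ 2 ∧ S.v₁ = S.k₀ + 2 ∧
    S.v = S.k₀ ^ 2 * (S.k₀ + 2) ∧ S.k = S.k₀ * (S.k₀ + 1) ∧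
    S.r = (S.k₀ + 1) * S.lam ∧ S.b = S.k₀ * (S.k₀ + 2) * S.lam ∧
    S.μ ∣ S.lam ∧
    (∀ (q : Q) (x y : P), S.proj x = q → S.proj y = q → x ≠ y →
      ((univ.filter fun i : ι => x ∈ S.blk i ∧ y ∈ S.blk i).image
        fun i => S.fiberTrace i q).card = S.lam / S.μ) ∧
    (∀ (q : Q) (x : P), S.proj x = q →
      ((univ.filter fun i : ι => x ∈ S.blk i).image
        fun i => S.fiberTrace i q).card = (S.k₀ + 1) * (S.lam / S.μ)) ∧
    (∀ q : Q,
      ((univ.filter fun i : ι => (S.fiberTrace i q).Nonempty).image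
        fun i => S.fiberTrace i q).card = S.k₀ * (S.k₀ + 1) * (S.lam / S.μ)) ∧
    S.k₀ ≤ S.lam ∧ (S.lam = S.k₀ ↔ S.v = S.b) := by
  classical
  obtain ⟨hp, hdvd, _hbound, _hmin⟩ := h
  obtain ⟨hk₁, _htrimg⟩ := hsym
  have hlam0 : 0 < S.lam := hp.pos
  have hv0' := S.one_lt_v₀
  have hv1' := S.one_lt_v₁
  have hk₀pos : 0 < S.k₀ := by have := S.two_le_k₀; omega
  have hvun : S.v = S.v₀ * S.v₁ := S.v_eq
  have hv4 : 4 ≤ S.v := by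
    rw [hvun]
    calc 4 = 2 * 2 := rfl
      _ ≤ S.v₀ * S.v₁ := Nat.mul_le_mul (by omega) (by omega)
  have hP : 1 < Fintype.card P := by rw [S.card_points]; omega
  obtain ⟨x, y, hxy⟩ := Fintype.exists_pair_of_one_lt_card hP
  obtain ⟨i₀, hi₀⟩ : ∃ i : ι, x ∈ S.blk i := by
    have hc := S.pair_count x y hxy
    have hpos : 0 < (univ.filter fun i : ι => x ∈ S.blk i ∧ y ∈ S.blk i).card := by
      rw [hc]; exact hlam0
    obtain ⟨i, hi⟩ := Finset.card_pos.mp hpos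
    exact ⟨i, (Finset.mem_filter.mp hi).2.1⟩
  have hr0 : 0 < S.r := by
    rw [← S.rep_count x]
    exact Finset.card_pos.mpr ⟨i₀, by simp [hi₀]⟩
  obtain ⟨s, hs⟩ := hdvd
  have Ea := S.rk_eq x
  have Eb := S.rk0_eq x
  have hk₀v₀ := S.k₀_le_v₀ i₀
  obtain ⟨q', hq'⟩ := Fintype.exists_ne_of_one_lt_card
    (by rw [S.card_classes]; omega) (S.proj x)
  have EM := S.meet_eq x q' hq'
  have EMm := S.split_eq x q'
  have Em := S.miss_const x hk₁ q' hq'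
  have hlr : S.lam < S.r := by
    by_contra hle
    push_neg at hle
    have h1 : S.lam * (S.v - 1) ≤ S.lam * (S.k - 1) := by
      rw [← Ea]
      exact Nat.mul_le_mul_right _ hle
    have h2 : S.v - 1 ≤ S.k - 1 := Nat.le_of_mul_le_mul_left h1 hlam0
    have := S.k_lt_v
    have := S.two_lt_k
    omega
  have hvb := S.fisher hlr
  have hbk := S.bk_eq
  have hvpos : 0 < S.v := by omega
  have hkr : S.k ≤ S.r := by
    have h1 : S.v * S.k ≤ S.v * S.r := by
      rw [← hbk]
      calc S.v * S.k ≤ S.b * S.k := Nat.mul_le_mul_right _ hvb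
        _ = S.b * S.k := rfl
    exact Nat.le_of_mul_le_mul_left h1 hvpos
  have hkval : S.k = S.k₀ * (S.v₁ - 1) := by rw [← S.k₀_mul_k₁, hk₁]
  have hrk : S.k₀ * (S.v₁ - 1) ≤ S.r := by rw [← hkval]; exact hkr
  obtain ⟨hv₀, hv₁, hsval, hlamk₀⟩ :=
    Setting.arith S.two_le_k₀ S.one_lt_v₁ hp hs Eb hk₀v₀ EM EMm Em hrk
  have hrval : S.r = (S.k₀ + 1) * S.lam := by rw [hs, hsval]; ring
  have hv₁1 : S.v₁ - 1 = S.k₀ + 1 := by omega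
  have hkval2 : S.k = S.k₀ * (S.k₀ + 1) := by rw [hkval, hv₁1]
  have hvval : S.v = S.k₀ ^ 2 * (S.k₀ + 2) := by rw [hvun, hv₀, hv₁]
  have hbval : S.b = S.k₀ * (S.k₀ + 2) * S.lam := by
    have hpos : 0 < S.k₀ * (S.k₀ + 1) := Nat.mul_pos hk₀pos (by omega)
    apply Nat.eq_of_mul_eq_mul_right hpos
    calc S.b * (S.k₀ * (S.k₀ + 1)) = S.b * S.k := by rw [hkval2]
      _ = S.v * S.r := hbk
      _ = (S.k₀ ^ 2 * (S.k₀ + 2)) * ((S.k₀ + 1) * S.lam) := by rw [hvval, hrval]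
      _ = S.k₀ * (S.k₀ + 2) * S.lam * (S.k₀ * (S.k₀ + 1)) := by ring
  have hμpos : 0 < S.μ := by
    have hne : ((S.blk i₀).filter fun z : P => S.proj z = S.proj x).Nonempty :=
      ⟨x, by simp [hi₀]⟩
    have hm := S.mu_count i₀ (S.proj x) hne
    rw [← hm]
    exact Finset.card_pos.mpr ⟨i₀, by simp⟩
  have hFgen : ∀ (q : Q) (a b : P), S.proj a = q → S.proj b = q → a ≠ b →
      S.lam = S.μ * (((univ.filter fun i : ι => a ∈ S.blk i ∧ b ∈ S.blk i).image
        fun i => S.fiberTrace i q).card) := by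
    intro q a b haq hbq hab
    have h1 : ∀ i ∈ (univ.filter fun i : ι => a ∈ S.blk i ∧ b ∈ S.blk i),
        ((S.blk i).filter fun z : P => S.proj z = q).Nonempty := by
      intro i hi
      simp only [Finset.mem_filter, Finset.mem_univ, true_and] at hi
      exact ⟨a, by simp [hi.1, haq]⟩
    have h2 : ∀ i ∈ (univ.filter fun i : ι => a ∈ S.blk i ∧ b ∈ S.blk i), ∀ j : ι,
        ((S.blk j).filter fun z : P => S.proj z = q)
          = ((S.blk i).filter fun z : P => S.proj z = q) →
        j ∈ (univ.filter fun i : ι => a ∈ S.blk i ∧ b ∈ S.blk i) := by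
      intro i hi j hj
      simp only [Finset.mem_filter, Finset.mem_univ, true_and] at hi ⊢
      have ha' : a ∈ (S.blk j).filter fun z : P => S.proj z = q := by
        rw [hj]; simp [hi.1, haq]
      have hb' : b ∈ (S.blk j).filter fun z : P => S.proj z = q := by
        rw [hj]; simp [hi.2, hbq]
      exact ⟨(Finset.mem_filter.mp ha').1, (Finset.mem_filter.mp hb').1⟩
    have hF := S.mu_partition q _ h1 h2
    rw [S.pair_count a b hab] at hF
    exact hF
  have hμdvd : S.μ ∣ S.lam := by
    have hcard2 : 1 < (univ.filter fun z : P => S.proj z = S.proj x).card := by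
      rw [S.fiber_card]; omega
    obtain ⟨a, b, ha, hb, hab⟩ := Finset.one_lt_card_iff.mp hcard2
    simp only [Finset.mem_filter, Finset.mem_univ, true_and] at ha hb
    exact ⟨_, hFgen (S.proj x) a b ha hb hab⟩
  obtain ⟨lam₀, hlam₀⟩ := hμdvd
  have hdivlam : S.lam / S.μ = lam₀ := by rw [hlam₀, Nat.mul_div_cancel_left _ hμpos]
  have concl8 : ∀ (q : Q) (a b : P), S.proj a = q → S.proj b = q → a ≠ b →
      (((univ.filter fun i : ι => a ∈ S.blk i ∧ b ∈ S.blk i).image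
        fun i => S.fiberTrace i q).card) = S.lam / S.μ := by
    intro q a b haq hbq hab
    rw [hFgen q a b haq hbq hab, Nat.mul_div_cancel_left _ hμpos]
  have concl9 : ∀ (q : Q) (a : P), S.proj a = q →
      (((univ.filter fun i : ι => a ∈ S.blk i).image
        fun i => S.fiberTrace i q).card) = (S.k₀ + 1) * (S.lam / S.μ) := by
    intro q a haq
    have h1 : ∀ i ∈ (univ.filter fun i : ι => a ∈ S.blk i),
        ((S.blk i).filter fun z : P => S.proj z = q).Nonempty := by
      intro i hi
      simp only [Finset.mem_filter, Finset.mem_univ, true_and] at hi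
      exact ⟨a, by simp [hi, haq]⟩
    have h2 : ∀ i ∈ (univ.filter fun i : ι => a ∈ S.blk i), ∀ j : ι,
        ((S.blk j).filter fun z : P => S.proj z = q)
          = ((S.blk i).filter fun z : P => S.proj z = q) →
        j ∈ (univ.filter fun i : ι => a ∈ S.blk i) := by
      intro i hi j hj
      simp only [Finset.mem_filter, Finset.mem_univ, true_and] at hi ⊢
      have ha' : a ∈ (S.blk j).filter fun z : P => S.proj z = q := by
        rw [hj]; simp [hi, haq]
      exact (Finset.mem_filter.mp ha').1
    have hF := S.mu_partition q _ h1 h2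
    rw [S.rep_count a] at hF
    set N := ((univ.filter fun i : ι => a ∈ S.blk i).image
      fun i => S.fiberTrace i q).card with hN
    have h3 : S.μ * ((S.k₀ + 1) * lam₀) = S.μ * N := by
      rw [← hF, hrval, hlam₀]; ring
    have h4 := Nat.eq_of_mul_eq_mul_left hμpos h3
    rw [hdivlam]
    exact h4.symm
  have concl10 : ∀ q : Q,
      (((univ.filter fun i : ι =>
          ((S.blk i).filter fun z : P => S.proj z = q).Nonempty).image
        fun i => S.fiberTrace i q).card) = S.k₀ * (S.k₀ + 1) * (S.lam / S.μ) := by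
    intro q
    have hcm := S.class_meet q
    have h1 : ∀ i ∈ (univ.filter fun i : ι =>
        ((S.blk i).filter fun z : P => S.proj z = q).Nonempty),
        ((S.blk i).filter fun z : P => S.proj z = q).Nonempty := by
      intro i hi
      exact (Finset.mem_filter.mp hi).2
    have h2 : ∀ i ∈ (univ.filter fun i : ι =>
        ((S.blk i).filter fun z : P => S.proj z = q).Nonempty), ∀ j : ι,
        ((S.blk j).filter fun z : P => S.proj z = q)
          = ((S.blk i).filter fun z : P => S.proj z = q) →
        j ∈ (univ.filter fun i : ι =>
          ((S.blk i).filter fun z : P => S.proj z = q).Nonempty) := by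
      intro i hi j hj
      refine Finset.mem_filter.mpr ⟨Finset.mem_univ _, ?_⟩
      rw [hj]
      exact (Finset.mem_filter.mp hi).2
    have hF := S.mu_partition q _ h1 h2
    rw [hF] at hcm
    set N := ((univ.filter fun i : ι =>
        ((S.blk i).filter fun z : P => S.proj z = q).Nonempty).image
      fun i => S.fiberTrace i q).card with hN
    have h3 : (S.k₀ * S.μ) * (S.k₀ * (S.k₀ + 1) * lam₀) = (S.k₀ * S.μ) * N := by
      calc (S.k₀ * S.μ) * (S.k₀ * (S.k₀ + 1) * lam₀) = S.v₀ * S.r := by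
            rw [hv₀, hrval, hlam₀]; ring
        _ = S.k₀ * (S.μ * N) := hcm.symm
        _ = (S.k₀ * S.μ) * N := by ring
    have h4 := Nat.eq_of_mul_eq_mul_left (Nat.mul_pos hk₀pos hμpos) h3
    rw [hdivlam]
    exact h4.symm
  refine ⟨hv₀, hv₁, hvval, hkval2, hrval, hbval, ⟨lam₀, hlam₀⟩, concl8, concl9,
    concl10, hlamk₀, ?_, ?_⟩
  · intro hle
    rw [hvval, hbval, hle]
    ring
  · intro hvb2
    have h1 : (S.k₀ * (S.k₀ + 2)) * S.k₀ = (S.k₀ * (S.k₀ + 2)) * S.lam := by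
      calc (S.k₀ * (S.k₀ + 2)) * S.k₀ = S.k₀ ^ 2 * (S.k₀ + 2) := by ring
        _ = S.v := hvval.symm
        _ = S.b := hvb2
        _ = S.k₀ * (S.k₀ + 2) * S.lam := hbval
        _ = (S.k₀ * (S.k₀ + 2)) * S.lam := by ring
    exact (Nat.eq_of_mul_eq_mul_left (Nat.mul_pos hk₀pos (by omega)) h1).symm

end FlagTransitivePaper
end

section
/- Assume Hypothesis 3/2 (with the Camina–Zieschang data from the context), and set A = gcd(k₁−1, v₁−1). Then: (1) there is an integer z ≥ 1 with v₀ = (z(k₀−1)+1)·k₀; (2) (v₀−1)/(k₀−1) = z·k₀ + 1; (3) k₁ = A(z(k₀−1)+1)+1 and v₁ = A(zk₀+1)+1, equivalently k₁ − 1 = A·(v₀/k₀) and v₁ − 1 = A·(v₀−1)/(k₀−1); (4) λ ≥ (k₀−1)A + 1, and in particular either λ > k₀, or λ = k₀ and A = 1. -/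
open Finset

namespace FlagTransitivePaper

variable {P ι Q G : Type*} [Fintype P] [DecidableEq P] [Fintype ι] [Fintype Q]
  [DecidableEq Q] [Group G] [MulAction G P] [MulAction G ι] [MulAction G Q]

section AuxStatement7

private lemma exists_proj_eq (S : Setting P ι Q G) (q : Q) : ∃ x : P, S.proj x = q := by
  have h := S.fiber_card q
  have hpos : 0 < (univ.filter fun x : P => S.proj x = q).card := by
    rw [h]; exact lt_trans one_pos S.one_lt_v₀
  obtain ⟨x, hx⟩ := Finset.card_pos.mp hpos
  exact ⟨x, (mem_filter.mp hx).2⟩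

private lemma fiberTrace_card_of_mem (S : Setting P ι Q G) {i : ι} {q : Q}
    (h : ((S.blk i).filter fun x => S.proj x = q).Nonempty) :
    ((S.blk i).filter fun x => S.proj x = q).card = S.k₀ := by
  rcases S.blk_fiber_card i q with h0 | hk
  · exact absurd (Finset.card_eq_zero.mp h0) (Finset.nonempty_iff_ne_empty.mp h)
  · exact hk

private lemma count1 (S : Setting P ι Q G) (x : P) :
    S.r * S.k₀ = S.lam * (S.v₀ - 1) + S.r := by
  classical
  set q := S.proj x with hq
  have key : (∑ i : ι, ∑ y : P, if x ∈ S.blk i ∧ y ∈ S.blk i ∧ S.proj y = q then (1:ℕ) else 0)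
      = ∑ y : P, ∑ i : ι, if x ∈ S.blk i ∧ y ∈ S.blk i ∧ S.proj y = q then (1:ℕ) else 0 :=
    Finset.sum_comm
  have lhs : (∑ i : ι, ∑ y : P, if x ∈ S.blk i ∧ y ∈ S.blk i ∧ S.proj y = q then (1:ℕ) else 0)
      = S.r * S.k₀ := by
    have step : ∀ i : ι, (∑ y : P, if x ∈ S.blk i ∧ y ∈ S.blk i ∧ S.proj y = q then (1:ℕ) else 0)
        = if x ∈ S.blk i then S.k₀ else 0 := by
      intro i
      by_cases hx : x ∈ S.blk i
      · simp only [hx, true_and, if_true]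
        rw [Finset.sum_boole]
        have hset : (univ.filter fun y : P => y ∈ S.blk i ∧ S.proj y = q)
            = (S.blk i).filter fun y => S.proj y = q := by
          ext y; simp
        rw [hset]
        exact fiberTrace_card_of_mem S ⟨x, by simp [hx, hq]⟩
      · simp [hx]
    rw [Finset.sum_congr rfl fun i _ => step i, Finset.sum_ite, Finset.sum_const,
      Finset.sum_const_zero, add_zero, smul_eq_mul, S.rep_count x]
  have rhs : (∑ y : P, ∑ i : ι, if x ∈ S.blk i ∧ y ∈ S.blk i ∧ S.proj y = q then (1:ℕ) else 0)
      = S.lam * (S.v₀ - 1) + S.r := by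
    have step : ∀ y : P, (∑ i : ι, if x ∈ S.blk i ∧ y ∈ S.blk i ∧ S.proj y = q then (1:ℕ) else 0)
        = if S.proj y = q then (if y = x then S.r else S.lam) else 0 := by
      intro y
      by_cases hy : S.proj y = q
      · by_cases hyx : y = x
        · subst hyx
          simp only [hy, if_true, and_true, and_self]
          rw [Finset.sum_boole, Nat.cast_id, S.rep_count y]
        · simp only [hy, and_true, if_true, if_neg hyx]
          rw [Finset.sum_boole, Nat.cast_id, S.pair_count x y (fun hxy => hyx hxy.symm)]
      · simp [hy]
    rw [Finset.sum_congr rfl fun y _ => step y, ← Finset.sum_filter]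
    have hx : x ∈ univ.filter fun y : P => S.proj y = q := by simp [hq]
    rw [← Finset.add_sum_erase _ _ hx, if_pos rfl]
    have herase : ∀ y ∈ (univ.filter fun y : P => S.proj y = q).erase x,
        (if y = x then S.r else S.lam) = S.lam := by
      intro y hy
      rw [if_neg (Finset.mem_erase.mp hy).1]
    rw [Finset.sum_congr rfl herase, Finset.sum_const, Finset.card_erase_of_mem hx,
      S.fiber_card q, smul_eq_mul, add_comm, mul_comm]
  rw [lhs, rhs] at key
  exact key

end AuxStatement7
private lemma count2 (S : Setting P ι Q G) (x : P) :
    S.r * S.k = S.lam * (S.v - 1) + S.r := by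
  classical
  have key : (∑ i : ι, ∑ y : P, if x ∈ S.blk i ∧ y ∈ S.blk i then (1:ℕ) else 0)
      = ∑ y : P, ∑ i : ι, if x ∈ S.blk i ∧ y ∈ S.blk i then (1:ℕ) else 0 :=
    Finset.sum_comm
  have lhs : (∑ i : ι, ∑ y : P, if x ∈ S.blk i ∧ y ∈ S.blk i then (1:ℕ) else 0)
      = S.r * S.k := by
    have step : ∀ i : ι, (∑ y : P, if x ∈ S.blk i ∧ y ∈ S.blk i then (1:ℕ) else 0)
        = if x ∈ S.blk i then S.k else 0 := by
      intro i
      by_cases hx : x ∈ S.blk i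
      · simp only [hx, true_and, if_true]
        rw [Finset.sum_boole, Nat.cast_id]
        have hset : (univ.filter fun y : P => y ∈ S.blk i) = S.blk i := by
          ext y; simp
        rw [hset, S.blk_card i]
      · simp [hx]
    rw [Finset.sum_congr rfl fun i _ => step i, Finset.sum_ite, Finset.sum_const,
      Finset.sum_const_zero, add_zero, smul_eq_mul, S.rep_count x]
  have rhs : (∑ y : P, ∑ i : ι, if x ∈ S.blk i ∧ y ∈ S.blk i then (1:ℕ) else 0)
      = S.lam * (S.v - 1) + S.r := by
    have step : ∀ y : P, (∑ i : ι, if x ∈ S.blk i ∧ y ∈ S.blk i then (1:ℕ) else 0)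
        = if y = x then S.r else S.lam := by
      intro y
      by_cases hyx : y = x
      · subst hyx
        rw [if_pos rfl]
        simp only [and_self]
        rw [Finset.sum_boole, Nat.cast_id, S.rep_count y]
      · rw [if_neg hyx, Finset.sum_boole, Nat.cast_id,
          S.pair_count x y (fun hxy => hyx hxy.symm)]
    rw [Finset.sum_congr rfl fun y _ => step y,
      ← Finset.add_sum_erase _ _ (Finset.mem_univ x), if_pos rfl]
    have herase : ∀ y ∈ (univ : Finset P).erase x,
        (if y = x then S.r else S.lam) = S.lam := by
      intro y hy
      rw [if_neg (Finset.mem_erase.mp hy).1]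
    rw [Finset.sum_congr rfl herase, Finset.sum_const,
      Finset.card_erase_of_mem (Finset.mem_univ x), Finset.card_univ, S.card_points,
      smul_eq_mul, add_comm, mul_comm]
  rw [lhs, rhs] at key
  exact key

private lemma count3 (S : Setting P ι Q G) (q : Q) :
    (univ.filter fun i : ι => ((S.blk i).filter fun x => S.proj x = q).Nonempty).card * S.k₀
      = S.v₀ * S.r := by
  classical
  have key : (∑ i : ι, ∑ y : P, if y ∈ S.blk i ∧ S.proj y = q then (1:ℕ) else 0)
      = ∑ y : P, ∑ i : ι, if y ∈ S.blk i ∧ S.proj y = q then (1:ℕ) else 0 :=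
    Finset.sum_comm
  have lhs : (∑ i : ι, ∑ y : P, if y ∈ S.blk i ∧ S.proj y = q then (1:ℕ) else 0)
      = (univ.filter fun i : ι => ((S.blk i).filter fun x => S.proj x = q).Nonempty).card
          * S.k₀ := by
    have step : ∀ i : ι, (∑ y : P, if y ∈ S.blk i ∧ S.proj y = q then (1:ℕ) else 0)
        = if ((S.blk i).filter fun x => S.proj x = q).Nonempty then S.k₀ else 0 := by
      intro i
      rw [Finset.sum_boole, Nat.cast_id]
      have hset : (univ.filter fun y : P => y ∈ S.blk i ∧ S.proj y = q)
          = (S.blk i).filter fun y => S.proj y = q := by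
        ext y; simp
      rw [hset]
      by_cases hne : ((S.blk i).filter fun x => S.proj x = q).Nonempty
      · rw [if_pos hne]; exact fiberTrace_card_of_mem S hne
      · rw [if_neg hne, Finset.not_nonempty_iff_eq_empty.mp hne, Finset.card_empty]
    rw [Finset.sum_congr rfl fun i _ => step i, Finset.sum_ite, Finset.sum_const,
      Finset.sum_const_zero, add_zero, smul_eq_mul]
  have rhs : (∑ y : P, ∑ i : ι, if y ∈ S.blk i ∧ S.proj y = q then (1:ℕ) else 0)
      = S.v₀ * S.r := by
    have step : ∀ y : P, (∑ i : ι, if y ∈ S.blk i ∧ S.proj y = q then (1:ℕ) else 0)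
        = if S.proj y = q then S.r else 0 := by
      intro y
      by_cases hy : S.proj y = q
      · simp only [hy, and_true, if_true]
        rw [Finset.sum_boole, Nat.cast_id, S.rep_count y]
      · simp [hy]
    rw [Finset.sum_congr rfl fun y _ => step y, Finset.sum_ite, Finset.sum_const,
      Finset.sum_const_zero, add_zero, smul_eq_mul, S.fiber_card q]
  rw [lhs, rhs] at key
  exact key

private lemma count5 (S : Setting P ι Q G) : S.b * S.k = S.v * S.r := by
  classical
  have key : (∑ i : ι, ∑ y : P, if y ∈ S.blk i then (1:ℕ) else 0)
      = ∑ y : P, ∑ i : ι, if y ∈ S.blk i then (1:ℕ) else 0 :=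
    Finset.sum_comm
  have lhs : (∑ i : ι, ∑ y : P, if y ∈ S.blk i then (1:ℕ) else 0) = S.b * S.k := by
    have step : ∀ i : ι, (∑ y : P, if y ∈ S.blk i then (1:ℕ) else 0) = S.k := by
      intro i
      rw [Finset.sum_boole, Nat.cast_id]
      have hset : (univ.filter fun y : P => y ∈ S.blk i) = S.blk i := by ext y; simp
      rw [hset, S.blk_card i]
    rw [Finset.sum_congr rfl fun i _ => step i, Finset.sum_const, Finset.card_univ,
      S.card_blocks, smul_eq_mul]
  have rhs : (∑ y : P, ∑ i : ι, if y ∈ S.blk i then (1:ℕ) else 0) = S.v * S.r := by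
    have step : ∀ y : P, (∑ i : ι, if y ∈ S.blk i then (1:ℕ) else 0) = S.r := by
      intro y
      rw [Finset.sum_boole, Nat.cast_id, S.rep_count y]
    rw [Finset.sum_congr rfl fun y _ => step y, Finset.sum_const, Finset.card_univ,
      S.card_points, smul_eq_mul]
  rw [lhs, rhs] at key
  exact key

private lemma count_v (S : Setting P ι Q G) : S.v = S.v₁ * S.v₀ := by
  classical
  rw [← S.card_points, ← S.card_classes, ← Finset.card_univ (α := P),
    Finset.card_eq_sum_card_fiberwise (f := S.proj) (t := univ) (fun x _ => Finset.mem_univ _)]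
  rw [Finset.sum_congr rfl fun q _ => S.fiber_card q, Finset.sum_const, Finset.card_univ,
    smul_eq_mul]
private lemma count4 (S : Setting P ι Q G)
    (hQ1 : ∀ q q' : Q, q ≠ q' →
      (univ.filter fun i : ι => q ∈ S.trace i ∧ q' ∈ S.trace i).card = S.lam₁ * S.η)
    (q : Q) :
    (univ.filter fun i : ι => ((S.blk i).filter fun x => S.proj x = q).Nonempty).card * S.k₁
      = S.lam₁ * S.η * (S.v₁ - 1)
        + (univ.filter fun i : ι => ((S.blk i).filter fun x => S.proj x = q).Nonempty).card := by
  classical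
  have hmem : ∀ (i : ι) (q' : Q),
      q' ∈ S.trace i ↔ ((S.blk i).filter fun x => S.proj x = q').Nonempty := by
    intro i q'
    unfold Setting.trace
    rw [Finset.mem_filter]
    simp [Setting.fiberTrace]
  have key : (∑ i : ι, ∑ q' : Q,
        if ((S.blk i).filter fun x => S.proj x = q).Nonempty ∧
          ((S.blk i).filter fun x => S.proj x = q').Nonempty then (1:ℕ) else 0)
      = ∑ q' : Q, ∑ i : ι,
        if ((S.blk i).filter fun x => S.proj x = q).Nonempty ∧
          ((S.blk i).filter fun x => S.proj x = q').Nonempty then (1:ℕ) else 0 :=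
    Finset.sum_comm
  have lhs : (∑ i : ι, ∑ q' : Q,
        if ((S.blk i).filter fun x => S.proj x = q).Nonempty ∧
          ((S.blk i).filter fun x => S.proj x = q').Nonempty then (1:ℕ) else 0)
      = (univ.filter fun i : ι => ((S.blk i).filter fun x => S.proj x = q).Nonempty).card
          * S.k₁ := by
    have step : ∀ i : ι, (∑ q' : Q,
          if ((S.blk i).filter fun x => S.proj x = q).Nonempty ∧
            ((S.blk i).filter fun x => S.proj x = q').Nonempty then (1:ℕ) else 0)
        = if ((S.blk i).filter fun x => S.proj x = q).Nonempty then S.k₁ else 0 := by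
      intro i
      by_cases hne : ((S.blk i).filter fun x => S.proj x = q).Nonempty
      · simp only [hne, true_and, if_true]
        rw [Finset.sum_boole, Nat.cast_id, ← S.trace_card i]
      · simp [hne]
    rw [Finset.sum_congr rfl fun i _ => step i, Finset.sum_ite, Finset.sum_const,
      Finset.sum_const_zero, add_zero, smul_eq_mul]
  have rhs : (∑ q' : Q, ∑ i : ι,
        if ((S.blk i).filter fun x => S.proj x = q).Nonempty ∧
          ((S.blk i).filter fun x => S.proj x = q').Nonempty then (1:ℕ) else 0)
      = S.lam₁ * S.η * (S.v₁ - 1)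
        + (univ.filter fun i : ι => ((S.blk i).filter fun x => S.proj x = q).Nonempty).card := by
    have step : ∀ q' : Q, (∑ i : ι,
          if ((S.blk i).filter fun x => S.proj x = q).Nonempty ∧
            ((S.blk i).filter fun x => S.proj x = q').Nonempty then (1:ℕ) else 0)
        = if q' = q then
            (univ.filter fun i : ι => ((S.blk i).filter fun x => S.proj x = q).Nonempty).card
          else S.lam₁ * S.η := by
      intro q'
      by_cases hq' : q' = q
      · subst hq'
        rw [if_pos rfl, Finset.sum_boole, Nat.cast_id]
        congr 1
        ext i
        simp [and_self]
      · rw [if_neg hq', Finset.sum_boole, Nat.cast_id, ← hQ1 q q' (fun h => hq' h.symm)]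
        congr 1
        ext i
        simp [hmem]
    rw [Finset.sum_congr rfl fun q' _ => step q',
      ← Finset.add_sum_erase _ _ (Finset.mem_univ q), if_pos rfl]
    have herase : ∀ q' ∈ (univ : Finset Q).erase q,
        (if q' = q then
            (univ.filter fun i : ι => ((S.blk i).filter fun x => S.proj x = q).Nonempty).card
          else S.lam₁ * S.η) = S.lam₁ * S.η := by
      intro q' hq'
      rw [if_neg (Finset.mem_erase.mp hq').1]
    rw [Finset.sum_congr rfl herase, Finset.sum_const,
      Finset.card_erase_of_mem (Finset.mem_univ q), Finset.card_univ, S.card_classes,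
      smul_eq_mul, add_comm, mul_comm (S.v₁ - 1)]
  rw [lhs, rhs] at key
  exact key
private lemma fisher (S : Setting P ι Q G) (hlr : S.lam < S.r) : S.v ≤ S.b := by
  classical
  set N : P → ι → ℚ := fun x i => if x ∈ S.blk i then 1 else 0 with hN
  have entry : ∀ x y : P, (∑ i : ι, N x i * N y i)
      = if x = y then (S.r : ℚ) else (S.lam : ℚ) := by
    intro x y
    have hterm : ∀ i : ι, N x i * N y i
        = if x ∈ S.blk i ∧ y ∈ S.blk i then (1:ℚ) else 0 := by
      intro i
      by_cases h1 : x ∈ S.blk i <;> by_cases h2 : y ∈ S.blk i <;> simp [N, h1, h2]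
    rw [Finset.sum_congr rfl fun i _ => hterm i, Finset.sum_boole]
    by_cases hxy : x = y
    · subst hxy
      rw [if_pos rfl]
      have hset : (univ.filter fun i : ι => x ∈ S.blk i ∧ x ∈ S.blk i)
          = univ.filter fun i : ι => x ∈ S.blk i := by
        ext i; simp
      rw [hset, S.rep_count x]
    · rw [if_neg hxy, S.pair_count x y hxy]
  have li : LinearIndependent ℚ N := by
    rw [Fintype.linearIndependent_iff]
    intro g hg
    have hg' : ∀ i : ι, (∑ y : P, g y * N y i) = 0 := by
      intro i
      have h := congrFun hg i
      simpa [Finset.sum_apply] using h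
    have key : (∑ i : ι, (∑ y : P, g y * N y i) * (∑ z : P, g z * N z i)) = 0 := by
      simp [hg']
    have expand : (∑ i : ι, (∑ y : P, g y * N y i) * (∑ z : P, g z * N z i))
        = ((S.r : ℚ) - S.lam) * (∑ y : P, g y ^ 2) + S.lam * (∑ y : P, g y) ^ 2 := by
      have e1 : ∀ i : ι, (∑ y : P, g y * N y i) * (∑ z : P, g z * N z i)
          = ∑ y : P, ∑ z : P, (g y * g z) * (N y i * N z i) := by
        intro i
        rw [Finset.sum_mul_sum]
        exact Finset.sum_congr rfl fun y _ => Finset.sum_congr rfl fun z _ => by ring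
      rw [Finset.sum_congr rfl fun i _ => e1 i]
      rw [Finset.sum_comm]
      have e2 : ∀ y : P, (∑ i : ι, ∑ z : P, (g y * g z) * (N y i * N z i))
          = ∑ z : P, (g y * g z) * (if y = z then (S.r : ℚ) else S.lam) := by
        intro y
        rw [Finset.sum_comm]
        refine Finset.sum_congr rfl fun z _ => ?_
        rw [← Finset.mul_sum, entry y z]
      rw [Finset.sum_congr rfl fun y _ => e2 y]
      have e3 : ∀ y : P, (∑ z : P, (g y * g z) * (if y = z then (S.r : ℚ) else S.lam))
          = ((S.r : ℚ) - S.lam) * g y ^ 2 + S.lam * g y * (∑ z : P, g z) := by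
        intro y
        have hterm : ∀ z : P, (g y * g z) * (if y = z then (S.r : ℚ) else S.lam)
            = (if y = z then ((S.r : ℚ) - S.lam) * g y ^ 2 else 0) + S.lam * g y * g z := by
          intro z
          by_cases hyz : y = z
          · subst hyz; simp; ring
          · simp [hyz]; ring
        rw [Finset.sum_congr rfl fun z _ => hterm z, Finset.sum_add_distrib,
          Finset.sum_ite_eq _ y (fun _ => ((S.r : ℚ) - S.lam) * g y ^ 2),
          if_pos (Finset.mem_univ y), ← Finset.mul_sum]
      rw [Finset.sum_congr rfl fun y _ => e3 y, Finset.sum_add_distrib, ← Finset.mul_sum]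
      have : (∑ y : P, (S.lam : ℚ) * g y * (∑ z : P, g z))
          = S.lam * (∑ y : P, g y) ^ 2 := by
        rw [← Finset.sum_mul, ← Finset.mul_sum]
        ring
      rw [this]
    rw [expand] at key
    have hsq : (0:ℚ) ≤ ∑ y : P, g y ^ 2 :=
      Finset.sum_nonneg fun y _ => sq_nonneg _
    have hst : (0:ℚ) ≤ S.lam * (∑ y : P, g y) ^ 2 :=
      mul_nonneg (Nat.cast_nonneg _) (sq_nonneg _)
    have hrl : (0:ℚ) < (S.r : ℚ) - S.lam := by
      have : (S.lam : ℚ) < S.r := by exact_mod_cast hlr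
      linarith
    have hzero : (∑ y : P, g y ^ 2) = 0 := by nlinarith
    intro x
    have hx := (Finset.sum_eq_zero_iff_of_nonneg fun y _ => sq_nonneg (g y)).mp hzero x
      (Finset.mem_univ x)
    exact pow_eq_zero_iff two_ne_zero |>.mp hx
  have hcard := li.fintype_card_le_finrank
  rw [Module.finrank_fintype_fun_eq_card] at hcard
  rw [S.card_points, S.card_blocks] at hcard
  exact hcard
private lemma sq_dvd_helper {a k v p : ℕ} (hp : p.Prime) (ha : a ≠ 0) (hk : k ≠ 0)
    (hv : v ≠ 0) (h : a * k ^ 2 = v ^ 2 * p) : k ∣ v := by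
  rw [← Nat.factorization_le_iff_dvd hk hv, Finsupp.le_def]
  intro q
  have h1 : (a * k ^ 2).factorization = (v ^ 2 * p).factorization := by rw [h]
  rw [Nat.factorization_mul ha (pow_ne_zero 2 hk),
    Nat.factorization_mul (pow_ne_zero 2 hv) hp.ne_zero,
    Nat.factorization_pow, Nat.factorization_pow] at h1
  have h2 := DFunLike.congr_fun h1 q
  simp only [Finsupp.add_apply, Finsupp.smul_apply, smul_eq_mul] at h2
  have hple : p.factorization q ≤ 1 := by
    rw [hp.factorization, Finsupp.single_apply]
    split <;> omega
  omega
/-- Proposition 3.6 of the paper. Assume Hypothesis 3/2, and set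
`A = gcd (k₁−1, v₁−1)`.  Then there is `z ≥ 1` with
`v₀ = (z(k₀−1)+1)·k₀`, `(v₀−1)/(k₀−1) = z·k₀+1`,
`k₁ = A(z(k₀−1)+1)+1` and `v₁ = A(zk₀+1)+1` (equivalently `k₁−1 = A·(v₀/k₀)` and
`v₁−1 = A·(v₀−1)/(k₀−1)`); moreover `λ ≥ (k₀−1)A+1`, and in particular either
`λ > k₀` or `λ = k₀` and `A = 1`. -/
theorem statement_7 (S : Setting P ι Q G) (h : S.Hyp32) :
    ∃ z : ℕ, 1 ≤ z ∧
      S.v₀ = (z * (S.k₀ - 1) + 1) * S.k₀ ∧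
      S.v₀ - 1 = (z * S.k₀ + 1) * (S.k₀ - 1) ∧
      S.k₁ = S.A * (z * (S.k₀ - 1) + 1) + 1 ∧
      S.v₁ = S.A * (z * S.k₀ + 1) + 1 ∧
      S.k₁ - 1 = S.A * (S.v₀ / S.k₀) ∧
      S.v₁ - 1 = S.A * ((S.v₀ - 1) / (S.k₀ - 1)) ∧
      (S.k₀ - 1) * S.A + 1 ≤ S.lam ∧
      (S.k₀ < S.lam ∨ (S.lam = S.k₀ ∧ S.A = 1)) := by
  classical
  obtain ⟨⟨hprime, hdvd, _hbound, _hmin⟩, ⟨hQ1, hQ2, _hQ3⟩, _hns⟩ := h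
  have hk₀2 : 2 ≤ S.k₀ := S.two_le_k₀
  have hv₀1 : 1 < S.v₀ := S.one_lt_v₀
  have hv₁1 : 1 < S.v₁ := S.one_lt_v₁
  have hlampos : 0 < S.lam := hprime.pos
  have hk₀pos : 0 < S.k₀ := by omega
  -- a point
  obtain ⟨q0⟩ : Nonempty Q := by
    rw [← Fintype.card_pos_iff, S.card_classes]; omega
  obtain ⟨x0, hx0⟩ := exists_proj_eq S q0
  have hc1 := count1 S x0
  have hc2 := count2 S x0
  -- r > 0
  have hrpos : 0 < S.r := by
    rcases Nat.eq_zero_or_pos S.r with h0 | h0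
    · rw [h0, Nat.zero_mul, Nat.add_zero] at hc1
      exact absurd hc1.symm (Nat.mul_ne_zero (by omega) (by omega))
    · exact h0
  -- r > λ
  have hrlam : S.lam < S.r := by
    by_contra hle
    push_neg at hle
    have h1' : S.lam * S.k ≤ S.lam * (S.v - 1) :=
      Nat.mul_le_mul_left _ (by have := S.k_lt_v; omega)
    have h2' : S.r * S.k ≤ S.lam * S.k := Nat.mul_le_mul_right _ hle
    omega
  obtain ⟨m, hm⟩ := hdvd
  have hmpos : 0 < m :=
    Nat.pos_of_ne_zero fun h0 => by rw [h0, Nat.mul_zero] at hm; omega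
  -- m * k₀ = (v₀ - 1) + m
  have hmk₀ : m * S.k₀ = (S.v₀ - 1) + m := by
    refine Nat.eq_of_mul_eq_mul_left hlampos ?_
    calc S.lam * (m * S.k₀) = (S.lam * m) * S.k₀ := by ring
      _ = S.r * S.k₀ := by rw [← hm]
      _ = S.lam * (S.v₀ - 1) + S.r := hc1
      _ = S.lam * ((S.v₀ - 1) + m) := by rw [hm]; ring
  have hmveq : m * (S.k₀ - 1) = S.v₀ - 1 := by
    have e : m * (S.k₀ - 1) + m = m * S.k₀ := by
      calc m * (S.k₀ - 1) + m = m * ((S.k₀ - 1) + 1) := by ring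
        _ = m * S.k₀ := by rw [Nat.sub_add_cancel (by omega)]
    exact Nat.add_right_cancel (e.trans hmk₀)
  -- a block through two classes
  obtain ⟨q1, q1', hq1ne⟩ := Fintype.exists_pair_of_one_lt_card
    (by rw [S.card_classes]; omega)
  obtain ⟨x1, hx1⟩ := exists_proj_eq S q1
  obtain ⟨y1, hy1⟩ := exists_proj_eq S q1'
  have hxy1 : x1 ≠ y1 := fun hh => hq1ne (by rw [← hx1, ← hy1, hh])
  have hpair := S.pair_count x1 y1 hxy1
  obtain ⟨i1, hi1⟩ := Finset.card_pos.mp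
    (show 0 < (univ.filter fun i : ι => x1 ∈ S.blk i ∧ y1 ∈ S.blk i).card by
      rw [hpair]; omega)
  rw [Finset.mem_filter] at hi1
  have htr1 : ((S.blk i1).filter fun x => S.proj x = q1).Nonempty :=
    ⟨x1, Finset.mem_filter.mpr ⟨hi1.2.1, hx1⟩⟩
  have htr1' : ((S.blk i1).filter fun x => S.proj x = q1').Nonempty :=
    ⟨y1, Finset.mem_filter.mpr ⟨hi1.2.2, hy1⟩⟩
  have hl1epos : 0 < S.lam₁ * S.η := by
    have hco := hQ1 q1 q1' hq1ne
    have hmemi : i1 ∈ univ.filter fun i : ι => q1 ∈ S.trace i ∧ q1' ∈ S.trace i := by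
      simp only [Finset.mem_filter, Finset.mem_univ, true_and, Setting.trace,
        Setting.fiberTrace]
      exact Finset.mem_filter.mpr ⟨Finset.mem_univ _, Finset.mem_filter.mpr ⟨Finset.mem_univ _, htr1⟩,
        Finset.mem_filter.mpr ⟨Finset.mem_univ _, htr1'⟩⟩
    rw [← hco]
    exact Finset.card_pos.mpr ⟨i1, hmemi⟩
  have hk₁2 : 2 ≤ S.k₁ := by
    have htrc := S.trace_card i1
    have hsub : ({q1, q1'} : Finset Q) ⊆
        univ.filter fun q => ((S.blk i1).filter fun x => S.proj x = q).Nonempty := by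
      intro q hq
      rw [Finset.mem_insert, Finset.mem_singleton] at hq
      rcases hq with rfl | rfl
      · exact Finset.mem_filter.mpr ⟨Finset.mem_univ _, htr1⟩
      · exact Finset.mem_filter.mpr ⟨Finset.mem_univ _, htr1'⟩
    calc 2 = ({q1, q1'} : Finset Q).card := (Finset.card_pair hq1ne).symm
      _ ≤ _ := Finset.card_le_card hsub
      _ = S.k₁ := htrc
  -- k₀ ∣ v₀
  have hfac : S.k₀ ∣ S.v₀ := by
    refine sq_dvd_helper hprime (a := S.lam₁ * S.η) (by omega) (by omega) (by omega) ?_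
    calc (S.lam₁ * S.η) * S.k₀ ^ 2 = S.lam₁ * (S.k₀ ^ 2 * S.η) := by ring
      _ = S.v₀ ^ 2 * S.lam := hQ2
  obtain ⟨x', hx'⟩ := hfac
  have hx'pos : 0 < x' := by
    rcases Nat.eq_zero_or_pos x' with h0 | h0
    · rw [h0, Nat.mul_zero] at hx'; omega
    · exact h0
  -- λ₁ η = λ x'^2
  have hl1eeq : S.lam₁ * S.η = S.lam * x' ^ 2 := by
    refine Nat.eq_of_mul_eq_mul_left (show 0 < S.k₀ ^ 2 by positivity) ?_
    calc S.k₀ ^ 2 * (S.lam₁ * S.η) = S.lam₁ * (S.k₀ ^ 2 * S.η) := by ring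
      _ = S.v₀ ^ 2 * S.lam := hQ2
      _ = S.k₀ ^ 2 * (S.lam * x' ^ 2) := by rw [hx']; ring
  -- number of blocks meeting a class
  have hNq : (univ.filter fun i : ι =>
      ((S.blk i).filter fun x => S.proj x = q0).Nonempty).card = x' * S.r :=
    Nat.eq_of_mul_eq_mul_right hk₀pos
      (by rw [count3 S q0, hx']; ring)
  -- m * k₁ = x'(v₁ - 1) + m
  have hmk₁ : m * S.k₁ = x' * (S.v₁ - 1) + m := by
    have h4 := count4 S hQ1 q0
    rw [hNq] at h4
    refine Nat.eq_of_mul_eq_mul_left (show 0 < S.lam * x' by positivity) ?_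
    calc (S.lam * x') * (m * S.k₁) = (x' * (S.lam * m)) * S.k₁ := by ring
      _ = (x' * S.r) * S.k₁ := by rw [← hm]
      _ = S.lam₁ * S.η * (S.v₁ - 1) + x' * S.r := h4
      _ = S.lam * x' ^ 2 * (S.v₁ - 1) + x' * (S.lam * m) := by rw [hl1eeq, hm]
      _ = (S.lam * x') * (x' * (S.v₁ - 1) + m) := by ring
  have hmk₁eq : m * (S.k₁ - 1) = x' * (S.v₁ - 1) := by
    have e : m * (S.k₁ - 1) + m = m * S.k₁ := by
      calc m * (S.k₁ - 1) + m = m * ((S.k₁ - 1) + 1) := by ring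
        _ = m * S.k₁ := by rw [Nat.sub_add_cancel (by omega)]
    exact Nat.add_right_cancel (e.trans hmk₁)
  -- x' * k₀ = m * (k₀ - 1) + 1
  have hlin : x' * S.k₀ = m * (S.k₀ - 1) + 1 := by
    rw [hmveq]
    have : x' * S.k₀ = S.v₀ := by rw [hx']; ring
    omega
  -- coprimality
  have hcop : Nat.Coprime x' m := by
    have hd1 : Nat.gcd x' m ∣ m * (S.k₀ - 1) :=
      Dvd.dvd.mul_right (Nat.gcd_dvd_right x' m) _
    have hd2 : Nat.gcd x' m ∣ m * (S.k₀ - 1) + 1 := by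
      rw [← hlin]
      exact Dvd.dvd.mul_right (Nat.gcd_dvd_left x' m) _
    exact Nat.dvd_one.mp ((Nat.dvd_add_right hd1).mp hd2)
  have hk₁x' : x' ∣ S.k₁ - 1 := by
    refine hcop.dvd_of_dvd_mul_left ?_
    rw [hmk₁eq]
    exact Dvd.dvd.mul_right (dvd_refl x') _
  obtain ⟨A', hA'⟩ := hk₁x'
  have hv₁A : S.v₁ - 1 = m * A' := by
    refine Nat.eq_of_mul_eq_mul_left hx'pos ?_
    calc x' * (S.v₁ - 1) = m * (S.k₁ - 1) := hmk₁eq.symm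
      _ = m * (x' * A') := by rw [hA']
      _ = x' * (m * A') := by ring
  have hA : S.A = A' := by
    rw [Setting.A, hA', hv₁A]
    rw [show x' * A' = A' * x' by ring, show m * A' = A' * m by ring,
      Nat.gcd_mul_left, hcop, Nat.mul_one]
  have hApos : 1 ≤ A' := by
    rcases Nat.eq_zero_or_pos A' with h0 | h0
    · rw [h0, Nat.mul_zero] at hA'; omega
    · exact h0
  -- z
  have hmx' : x' ≤ m := by
    have h1' : x' * (S.k₀ - 1) < x' * S.k₀ :=
      mul_lt_mul_of_pos_left (by omega : S.k₀ - 1 < S.k₀) hx'pos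
    have h2' : x' * (S.k₀ - 1) ≤ m * (S.k₀ - 1) := by omega
    exact Nat.le_of_mul_le_mul_right h2' (by omega)
  set z := m - x' with hzdef
  have hmz : m = x' + z := by omega
  have hx'z : x' = z * (S.k₀ - 1) + 1 := by
    have e1 : x' * S.k₀ = x' * (S.k₀ - 1) + x' := by
      calc x' * S.k₀ = x' * ((S.k₀ - 1) + 1) := by rw [Nat.sub_add_cancel (by omega)]
        _ = x' * (S.k₀ - 1) + x' := by ring
    have e2 : m * (S.k₀ - 1) = x' * (S.k₀ - 1) + z * (S.k₀ - 1) := by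
      rw [hmz]; ring
    have := hlin
    rw [e1, e2] at this
    omega
  have hmzk : m = z * S.k₀ + 1 := by
    have e3 : z * (S.k₀ - 1) + z = z * S.k₀ := by
      calc z * (S.k₀ - 1) + z = z * ((S.k₀ - 1) + 1) := by ring
        _ = z * S.k₀ := by rw [Nat.sub_add_cancel (by omega)]
    omega
  -- z ≥ 1
  have hzpos : 1 ≤ z := by
    rcases Nat.eq_zero_or_pos z with h0 | h0
    · exfalso
      rw [h0, Nat.zero_mul, Nat.zero_add] at hx'z
      have hx'1 : x' = 1 := hx'z
      have hm1 : m = 1 := by omega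
      have hveq : S.v = S.k := by
        have hk₁v₁ : S.k₁ = S.v₁ := by
          have h1' : S.k₁ - 1 = A' := by rw [hA', hx'1, Nat.one_mul]
          have h2' : S.v₁ - 1 = A' := by rw [hv₁A, hm1, Nat.one_mul]
          omega
        calc S.v = S.v₁ * S.v₀ := count_v S
          _ = S.v₁ * S.k₀ := by rw [hx', hx'1, Nat.mul_one]
          _ = S.k₀ * S.k₁ := by rw [hk₁v₁]; ring
          _ = S.k := S.k₀_mul_k₁
      have := S.k_lt_v
      omega
    · exact h0
  -- Fisher: k ≤ r
  have hbv := fisher S hrlam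
  have hc5 := count5 S
  have hvpos : 0 < S.v := by have := S.k_lt_v; have := S.two_lt_k; omega
  have hrk : S.k ≤ S.r := by
    have hh : S.v * S.k ≤ S.v * S.r := by
      calc S.v * S.k ≤ S.b * S.k := Nat.mul_le_mul_right _ hbv
        _ = S.v * S.r := hc5
    exact Nat.le_of_mul_le_mul_left hh hvpos
  -- the key inequality
  have hk₁eq : S.k₁ = x' * A' + 1 := by omega
  have hkeq : S.k = S.k₀ * (x' * A' + 1) := by rw [← hk₁eq]; exact S.k₀_mul_k₁.symm
  have hkey : (S.k₀ - 1) * A' < S.lam := by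
    have hlt : ((S.k₀ - 1) * A') * m < S.k := by
      obtain ⟨c, hc⟩ : ∃ c, S.k₀ = c + 2 := ⟨S.k₀ - 2, by omega⟩
      have hc1 : S.k₀ - 1 = c + 1 := by omega
      have expand : ((S.k₀ - 1) * A') * m + (A' + S.k₀) = S.k := by
        rw [hkeq, hx'z, hmzk, hc1, hc]
        ring
      omega
    have hfin : ((S.k₀ - 1) * A') * m < S.lam * m := by
      calc ((S.k₀ - 1) * A') * m < S.k := hlt
        _ ≤ S.r := hrk
        _ = S.lam * m := hm
    exact Nat.lt_of_mul_lt_mul_right hfin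
  refine ⟨z, hzpos, ?_, ?_, ?_, ?_, ?_, ?_, ?_, ?_⟩
  · rw [← hx'z, hx', Nat.mul_comm]
  · rw [← hmzk, ← hmveq, Nat.mul_comm]
  · rw [hA, ← hx'z, hk₁eq, Nat.mul_comm x' A']
  · rw [hA, ← hmzk]
    have hcomm : A' * m = m * A' := Nat.mul_comm _ _
    omega
  · have hdiv : S.v₀ / S.k₀ = x' := by rw [hx', Nat.mul_div_cancel_left _ hk₀pos]
    rw [hdiv, hA, hA', Nat.mul_comm]
  · have hdiv : (S.v₀ - 1) / (S.k₀ - 1) = m := by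
      rw [← hmveq, Nat.mul_div_cancel _ (by omega : 0 < S.k₀ - 1)]
    rw [hdiv, hA, hv₁A, Nat.mul_comm]
  · rw [hA]; omega
  · have hlamk0 : S.k₀ ≤ S.lam := by
      have h1' : S.k₀ - 1 ≤ (S.k₀ - 1) * A' := Nat.le_mul_of_pos_right _ hApos
      omega
    rcases Nat.lt_or_ge S.k₀ S.lam with hlt | hge
    · exact Or.inl hlt
    · right
      have hlameq : S.lam = S.k₀ := by omega
      have hA1 : A' ≤ 1 := by
        by_contra hA2
        push_neg at hA2
        have : (S.k₀ - 1) * 2 ≤ (S.k₀ - 1) * A' := Nat.mul_le_mul_left _ hA2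
        omega
      exact ⟨hlameq, by omega⟩
end FlagTransitivePaper
end
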